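/- arXiv:2601.16945 — 9 statements merged into one kernel-verified Lean document; each statement's English description precedes it below -/
import Mathlib

section
/- For λ ∈ ℝ, v ∈ ℝ^(1×m), S ∈ Sym(m) with Ŝ = [[λ, v],[vᵀ, S]] positive definite, and for s > -1/2, the integral ∫_{(0,∞)×ℝ^m} exp(-(t, τ)ᵀ Ŝ (t, τ)) t^{2s} dt dτ equals (1/2) π^{m/2} Γ(s + 1/2) ((det Ŝ)/(det S))^{-(s+1/2)} (det S)^{-1/2}. -/
open Matrix MeasureTheory
open scoped MatrixOrder

namespace Stmt1Aux

variable {m : ℕ}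

lemma quad_eq (S : Matrix (Fin m) (Fin m) ℝ) (hS : S.PosDef) (τ : Fin m → ℝ) :
    τ ⬝ᵥ S *ᵥ τ = (CFC.sqrt S *ᵥ τ) ⬝ᵥ (CFC.sqrt S *ᵥ τ) := by
  set Q := CFC.sqrt S with hQdef
  have hQQ : Q * Q = S := CFC.sqrt_mul_sqrt_self S hS.posSemidef.nonneg
  have hherm : Qᵀ = Q := (CFC.sqrt_nonneg S).posSemidef.isHermitian.eq
  rw [← hQQ, ← mulVec_mulVec, dotProduct_mulVec, ← mulVec_transpose, hherm]

lemma base_eq (y : Fin m → ℝ) : Real.exp (-(y ⬝ᵥ y)) = ∏ i, Real.exp (-(y i)^2) := by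
  rw [← Real.exp_sum]
  congr 1
  simp [dotProduct, Finset.sum_neg_distrib, sq]

lemma integrable_base : Integrable (fun y : Fin m → ℝ => Real.exp (-(y ⬝ᵥ y))) := by
  have : Integrable (fun x : ℝ => Real.exp (-x^2)) := by
    simpa using integrable_exp_neg_mul_sq (one_pos)
  simpa only [← base_eq, ← volume_pi] using Integrable.fintype_prod (ι := Fin m)
    (f := fun _ x => Real.exp (-x^2)) (fun _ => this)

lemma integral_base : (∫ y : Fin m → ℝ, Real.exp (-(y ⬝ᵥ y))) = Real.pi ^ ((m:ℝ)/2) := by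
  simp_rw [base_eq]
  rw [volume_pi, integral_fintype_prod_eq_pow (ι := Fin m) (fun x : ℝ => Real.exp (-x^2))]
  have : (∫ x : ℝ, Real.exp (-x^2)) = Real.sqrt Real.pi := by
    simpa using integral_gaussian 1
  rw [this, Fintype.card_fin]
  rw [← Real.rpow_natCast (Real.sqrt Real.pi) m, Real.sqrt_eq_rpow,
    ← Real.rpow_mul Real.pi_pos.le]
  congr 1; ring

lemma gauss_cov (S : Matrix (Fin m) (Fin m) ℝ) (hS : S.PosDef) :
    Integrable (fun τ : Fin m → ℝ => Real.exp (-(τ ⬝ᵥ S *ᵥ τ))) ∧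
    (∫ τ : Fin m → ℝ, Real.exp (-(τ ⬝ᵥ S *ᵥ τ)))
      = Real.pi ^ ((m:ℝ)/2) * S.det ^ (-(1/2) : ℝ) := by
  set Q := CFC.sqrt S with hQdef
  have hdet2 : Q.det * Q.det = S.det := by
    rw [← det_mul, CFC.sqrt_mul_sqrt_self S hS.posSemidef.nonneg]
  have hdetS : 0 < S.det := hS.det_pos
  have hdQ : Q.det ≠ 0 := by
    intro h; rw [h, mul_zero] at hdet2; linarith
  have habs : |Q.det| = S.det ^ ((1:ℝ)/2) := by
    rw [← Real.sqrt_eq_rpow, ← hdet2, ← abs_mul_abs_self Q.det, Real.sqrt_mul_self (abs_nonneg _)]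
  set T := Matrix.toLin' Q with hT
  have hTmeas : Measurable T := T.continuous_of_finiteDimensional.measurable
  have hmap : Measure.map T volume = ENNReal.ofReal |Q.det|⁻¹ • volume := by
    have := Real.map_matrix_volume_pi_eq_smul_volume_pi hdQ
    rw [abs_inv] at this
    exact this
  set f := fun y : Fin m → ℝ => Real.exp (-(y ⬝ᵥ y)) with hf
  have hfc : Continuous f := by
    apply Real.continuous_exp.comp
    exact (continuous_finset_sum _ fun i _ =>
      ((continuous_apply i).mul (continuous_apply i))).neg
  have hcomp : (fun τ : Fin m → ℝ => Real.exp (-(τ ⬝ᵥ S *ᵥ τ))) = f ∘ T := by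
    funext τ
    simp only [hf, Function.comp_apply, hT, Matrix.toLin'_apply]
    rw [quad_eq S hS τ]
  have hint : Integrable f (Measure.map T volume) := by
    rw [hmap]
    exact integrable_base.smul_measure ENNReal.ofReal_ne_top
  constructor
  · rw [hcomp]
    exact (integrable_map_measure (hfc.aestronglyMeasurable) hTmeas.aemeasurable).mp hint
  · rw [hcomp]
    have hIM := MeasureTheory.integral_map (μ := (volume : Measure (Fin m → ℝ)))
      hTmeas.aemeasurable (hfc.aestronglyMeasurable (μ := Measure.map T volume))
    have : integral volume (f ∘ T) = ∫ x : Fin m → ℝ, f (T x) := rfl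
    rw [this, ← hIM, hmap, integral_smul_measure, integral_base,
      ENNReal.toReal_ofReal (by positivity), habs, smul_eq_mul, mul_comm,
      Real.rpow_neg hdetS.le]

lemma gauss_shift (S : Matrix (Fin m) (Fin m) ℝ) (hS : S.PosDef) (a : Fin m → ℝ) :
    Integrable (fun τ : Fin m → ℝ => Real.exp (-((τ + a) ⬝ᵥ S *ᵥ (τ + a)))) ∧
    (∫ τ : Fin m → ℝ, Real.exp (-((τ + a) ⬝ᵥ S *ᵥ (τ + a))))
      = Real.pi ^ ((m:ℝ)/2) * S.det ^ (-(1/2) : ℝ) := by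
  obtain ⟨h1, h2⟩ := gauss_cov S hS
  refine ⟨h1.comp_add_right a, ?_⟩
  rw [← h2]
  exact integral_add_right_eq_self (fun τ : Fin m → ℝ => Real.exp (-(τ ⬝ᵥ S *ᵥ τ))) a

lemma measurable_rpow_const' (a : ℝ) : Measurable fun x : ℝ => x ^ a := by measurability

end Stmt1Aux

open Stmt1Aux in
/-- For `Ŝ = [[λ, v],[vᵀ, S]]` positive definite and `s > -1/2`,
`∫_{(0,∞)×ℝ^m} exp(-(t,τ)ᵀ Ŝ (t,τ)) t^{2s} dt dτ
  = (1/2) π^{m/2} Γ(s+1/2) (det Ŝ / det S)^{-(s+1/2)} (det S)^{-1/2}`. -/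
theorem stmt1 {m : ℕ} (l : ℝ) (v : Matrix (Fin 1) (Fin m) ℝ)
    (S : Matrix (Fin m) (Fin m) ℝ) (hS : S.IsSymm)
    (Shat : Matrix (Fin 1 ⊕ Fin m) (Fin 1 ⊕ Fin m) ℝ)
    (hShat : Shat = Matrix.fromBlocks (Matrix.of fun _ _ => l : Matrix (Fin 1) (Fin 1) ℝ) v vᵀ S)
    (hPD : Shat.PosDef) (s : ℝ) (hs : -1/2 < s) :
    (∫ τ : Fin m → ℝ, ∫ t in Set.Ioi (0 : ℝ),
        Real.exp (-((Sum.elim (fun _ => t) τ) ⬝ᵥ (Shat *ᵥ (Sum.elim (fun _ => t) τ))))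
          * t ^ (2 * s))
      = (1/2) * Real.pi ^ ((m : ℝ) / 2) * Real.Gamma (s + 1/2) *
          (Shat.det / S.det) ^ (-(s + 1/2)) * S.det ^ (-(1/2 : ℝ)) := by
  -- basic setup
  have hSherm : S.IsHermitian := by
    rw [Matrix.IsHermitian, Matrix.conjTranspose]
    exact hS
  have hSpd : S.PosDef := by
    refine .of_dotProduct_mulVec_pos hSherm fun y hy => ?_
    have h0 : (Sum.elim (0 : Fin 1 → ℝ) y) ≠ 0 := by
      intro h
      apply hy
      funext j
      exact congrFun h (Sum.inr j)
    have := hPD.dotProduct_mulVec_pos h0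
    simpa [hShat, Matrix.fromBlocks_mulVec, sumElim_dotProduct_sumElim] using this
  set w : Fin m → ℝ := fun j => v 0 j with hw
  have hdetS : 0 < S.det := hSpd.det_pos
  haveI : Invertible S := S.invertibleOfIsUnitDet (isUnit_iff_ne_zero.mpr hdetS.ne')
  set u : Fin m → ℝ := S⁻¹ *ᵥ w with hu
  have hSu : S *ᵥ u = w := by
    rw [hu, Matrix.mulVec_mulVec, Matrix.mul_nonsing_inv _ (isUnit_iff_ne_zero.mpr hdetS.ne'),
      Matrix.one_mulVec]
  set c : ℝ := l - w ⬝ᵥ u with hc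
  have hcdet : Shat.det = S.det * c := by
    rw [hShat, Matrix.det_fromBlocks₂₂]
    congr 1
    rw [Matrix.det_fin_one]
    simp only [Matrix.sub_apply, Matrix.of_apply, hc]
    congr 1
    simp [Matrix.mul_apply, Matrix.mulVec, dotProduct, hu, hw, Finset.mul_sum, mul_comm]
    have hSinv : (S⁻¹)ᵀ = S⁻¹ := by rw [Matrix.transpose_nonsing_inv, hS.eq]
    congr 1 with i
    congr 1 with j
    rw [show S⁻¹ j i = S⁻¹ i j from by conv_lhs => rw [← hSinv, Matrix.transpose_apply]]
  have hShatdetpos : 0 < Shat.det := hPD.det_pos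
  have hcpos : 0 < c := by
    rw [hcdet] at hShatdetpos
    nlinarith [hdetS]
  have hcval : c = Shat.det / S.det := by rw [hcdet, mul_div_cancel_left₀ _ hdetS.ne']
  have hsplit : ∀ (t : ℝ) (τ : Fin m → ℝ),
      (Sum.elim (fun _ => t) τ) ⬝ᵥ (Shat *ᵥ (Sum.elim (fun _ => t) τ))
        = (τ + t • u) ⬝ᵥ S *ᵥ (τ + t • u) + c * t^2 := by
    intro t τ
    simp only [hShat, Matrix.fromBlocks_mulVec, Sum.elim_comp_inl, Sum.elim_comp_inr,
      sumElim_dotProduct_sumElim]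
    have h1 : (fun _ => t : Fin 1 → ℝ) ⬝ᵥ ((Matrix.of fun _ _ => l) *ᵥ (fun _ => t : Fin 1 → ℝ) + v *ᵥ τ)
        = l * t^2 + t * (w ⬝ᵥ τ) := by
      simp [Matrix.mulVec, dotProduct, hw, Finset.mul_sum, mul_comm, mul_left_comm]
      rw [mul_add, Finset.mul_sum]
      ring
    have h2 : τ ⬝ᵥ (vᵀ *ᵥ (fun _ => t : Fin 1 → ℝ) + S *ᵥ τ) = t * (w ⬝ᵥ τ) + τ ⬝ᵥ S *ᵥ τ := by
      rw [dotProduct_add]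
      congr 1
      simp [Matrix.mulVec, dotProduct, hw, Finset.mul_sum, mul_comm, mul_left_comm]
    have hvm : u ᵥ* S = w := by
      rw [← hS.eq, Matrix.mulVec_transpose] at hSu
      exact hSu
    have h3 : (τ + t • u) ⬝ᵥ S *ᵥ (τ + t • u)
        = τ ⬝ᵥ S *ᵥ τ + t * (w ⬝ᵥ τ) + t * (w ⬝ᵥ τ) + t^2 * (w ⬝ᵥ u) := by
      rw [Matrix.mulVec_add, Matrix.mulVec_smul, hSu, dotProduct_add, add_dotProduct,
        add_dotProduct, dotProduct_smul, smul_dotProduct, smul_dotProduct,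
        dotProduct_smul, dotProduct_mulVec u, hvm]
      simp only [smul_eq_mul]
      rw [dotProduct_comm τ w, dotProduct_comm u w]
      ring
    rw [h1, h2, h3, hc]
    ring
  -- the analytic part
  set G : ℝ := Real.pi ^ ((m:ℝ)/2) * S.det ^ (-(1/2) : ℝ) with hG
  set K : ℝ → ℝ := fun t => Real.exp (-(c * t^2)) * t ^ (2*s) with hK
  set g : (Fin m → ℝ) → ℝ → ℝ :=
    fun τ t => Real.exp (-((τ + t • u) ⬝ᵥ S *ᵥ (τ + t • u))) * K t with hg
  have hpt : ∀ (τ : Fin m → ℝ) (t : ℝ),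
      Real.exp (-((Sum.elim (fun _ => t) τ) ⬝ᵥ (Shat *ᵥ (Sum.elim (fun _ => t) τ)))) * t ^ (2*s)
        = g τ t := by
    intro τ t
    rw [hsplit t τ, neg_add, Real.exp_add]
    simp only [hg, hK]
    ring
  have hinner : ∀ t : ℝ, (∫ τ : Fin m → ℝ, g τ t) = G * K t := by
    intro t
    simp only [hg]
    rw [MeasureTheory.integral_mul_const, (gauss_shift S hSpd (t • u)).2]
  have h2s : (-1 : ℝ) < 2 * s := by linarith
  have base : IntegrableOn (fun x : ℝ => x ^ (2*s) * Real.exp (-c * x^2)) (Set.Ioi 0) :=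
    integrableOn_rpow_mul_exp_neg_mul_sq hcpos h2s
  -- measurability of the uncurried function
  have hy : Continuous fun p : (Fin m → ℝ) × ℝ => p.1 + p.2 • u :=
    continuous_fst.add (continuous_snd.smul continuous_const)
  have hcont_q : Continuous fun p : (Fin m → ℝ) × ℝ =>
      (p.1 + p.2 • u) ⬝ᵥ S *ᵥ (p.1 + p.2 • u) := by
    simp only [dotProduct, Matrix.mulVec]
    apply continuous_finset_sum
    intro i _
    exact ((continuous_apply i).comp hy).mul
      (continuous_finset_sum _ fun j _ =>
        continuous_const.mul ((continuous_apply j).comp hy))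
  have hmeasg : AEStronglyMeasurable (Function.uncurry g)
      ((volume : Measure (Fin m → ℝ)).prod ((volume : Measure ℝ).restrict (Set.Ioi 0))) := by
    apply Measurable.aestronglyMeasurable
    simp only [Function.uncurry, hg, hK]
    have hrp0 : Measurable fun x : ℝ => x ^ (2*s) := measurable_rpow_const' (2*s)
    have hrp : Measurable fun p : (Fin m → ℝ) × ℝ => p.2 ^ (2*s) := hrp0.comp measurable_snd
    exact ((Real.continuous_exp.comp hcont_q.neg).measurable).mul
      (((Real.continuous_exp.comp
          ((continuous_const.mul (continuous_snd.pow 2)).neg)).measurable).mul hrp)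
  -- integrability of the uncurried function
  have hIntg : Integrable (Function.uncurry g)
      ((volume : Measure (Fin m → ℝ)).prod ((volume : Measure ℝ).restrict (Set.Ioi 0))) := by
    rw [MeasureTheory.integrable_prod_iff' hmeasg]
    constructor
    · refine Filter.Eventually.of_forall fun t => ?_
      exact (gauss_shift S hSpd (t • u)).1.mul_const (K t)
    · have hval : ∀ t : ℝ, (∫ τ : Fin m → ℝ, ‖Function.uncurry g (τ, t)‖) = G * ‖K t‖ := by
        intro t
        have : ∀ τ : Fin m → ℝ, ‖Function.uncurry g (τ, t)‖
            = Real.exp (-((τ + t • u) ⬝ᵥ S *ᵥ (τ + t • u))) * ‖K t‖ := by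
          intro τ
          simp only [Function.uncurry, hg]
          rw [norm_mul, Real.norm_eq_abs, Real.abs_exp]
        simp_rw [this]
        rw [MeasureTheory.integral_mul_const, (gauss_shift S hSpd (t • u)).2]
      simp_rw [hval]
      apply Integrable.congr ((base.const_mul G))
      rw [Filter.EventuallyEq, ae_restrict_iff' measurableSet_Ioi]
      refine Filter.Eventually.of_forall fun x hx => ?_
      have hxp : (0:ℝ) < x := hx
      have hK' : ‖K x‖ = Real.exp (-(c * x^2)) * x ^ (2*s) := by
        rw [hK]
        rw [Real.norm_eq_abs, abs_mul, Real.abs_exp,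
          abs_of_pos (Real.rpow_pos_of_pos hxp _)]
      rw [hK', neg_mul]
      ring
  -- main computation
  have hswap := MeasureTheory.integral_integral_swap hIntg
  simp_rw [hpt]
  rw [hswap]
  simp_rw [hinner]
  rw [MeasureTheory.integral_const_mul]
  have hKint : (∫ t in Set.Ioi (0:ℝ), K t)
      = c ^ (-(2*s + 1) / 2) * (1 / 2) * Real.Gamma ((2*s + 1) / 2) := by
    rw [show (∫ t in Set.Ioi (0:ℝ), K t)
        = ∫ x in Set.Ioi (0:ℝ), x ^ (2*s) * Real.exp (-c * x ^ (2:ℝ)) from ?_]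
    · exact integral_rpow_mul_exp_neg_mul_rpow two_pos h2s hcpos
    · refine setIntegral_congr_fun measurableSet_Ioi fun x hx => ?_
      rw [hK, show x ^ (2:ℝ) = x ^ 2 from by
        rw [show (2:ℝ) = ((2:ℕ):ℝ) from by norm_num, Real.rpow_natCast], neg_mul]
      ring
  rw [hKint, hG, hcval]
  rw [show -(2*s + 1) / 2 = -(s + 1/2) from by ring, show (2*s + 1) / 2 = s + 1/2 from by ring]
  ring
end

section
/- Let G be a finite simple graph with a subgroup Γ ≤ Aut(G) inducing an orbit coloring, and suppose Γ restricted to each vertex orbit is generously transitive. Then for any vertices v,w in the same Γ-orbit, m_{v→w} = m_{w→v} (the 2-path function is symmetric in its endpoints). -/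
private lemma orbitEq {V : Type*} (Γ : Subgroup (Equiv.Perm V)) (π : Equiv.Perm V)
    (hπ : π ∈ Γ) (s : Sym2 V) :
    {e | ∃ τ ∈ Γ, Sym2.map τ (Sym2.map π s) = e} = {e | ∃ τ ∈ Γ, Sym2.map τ s = e} := by
  ext e
  simp only [Set.mem_setOf_eq]
  constructor
  · rintro ⟨τ, hτ, rfl⟩
    refine ⟨τ * π, mul_mem hτ hπ, ?_⟩
    simp [Sym2.map_map, Equiv.Perm.coe_mul]
  · rintro ⟨τ, hτ, rfl⟩
    refine ⟨τ * π⁻¹, mul_mem hτ (inv_mem hπ), ?_⟩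
    simp [Sym2.map_map, Equiv.Perm.coe_mul, Function.comp_def]

/-- Let `Γ ≤ Aut(G)` induce the orbit coloring of extended edges, with
`Γ` generously transitive on each vertex orbit. Then for vertices `v, w` in the same
orbit, the 2-path function is symmetric in its endpoints: `m_{v→w} = m_{w→v}`.
Colors of extended edges are encoded by their Γ-orbits in `Sym2 V`; `ord : V → ℕ`
encodes the fixed ordering of the vertex orbits. -/
theorem stmt8 {V : Type*} [Fintype V] [DecidableEq V]
    (G : SimpleGraph V) (Γ : Subgroup (Equiv.Perm V))
    (hAut : ∀ σ ∈ Γ, ∀ u v : V, G.Adj (σ u) (σ v) ↔ G.Adj u v)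
    (hGenTrans : ∀ v w : V, (∃ σ ∈ Γ, σ v = w) → v ≠ w →
      ∃ σ ∈ Γ, σ v = w ∧ σ w = v)
    (ord : V → ℕ)
    (hordConst : ∀ σ ∈ Γ, ∀ v : V, ord (σ v) = ord v)
    (hordSep : ∀ v w : V, ord v = ord w → ∃ σ ∈ Γ, σ v = w)
    (v w : V) (horb : ∃ σ ∈ Γ, σ v = w) :
    ∀ k h : Set (Sym2 V),
      Set.ncard {u : V | ord u ≤ min (ord v) (ord w) ∧
          (v = u ∨ G.Adj v u) ∧ (u = w ∨ G.Adj u w) ∧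
          {e : Sym2 V | ∃ π ∈ Γ, Sym2.map π s(v, u) = e} = k ∧
          {e : Sym2 V | ∃ π ∈ Γ, Sym2.map π s(u, w) = e} = h}
        = Set.ncard {u : V | ord u ≤ min (ord w) (ord v) ∧
          (w = u ∨ G.Adj w u) ∧ (u = v ∨ G.Adj u v) ∧
          {e : Sym2 V | ∃ π ∈ Γ, Sym2.map π s(w, u) = e} = k ∧
          {e : Sym2 V | ∃ π ∈ Γ, Sym2.map π s(u, v) = e} = h} := by
  intro k h
  rcases eq_or_ne v w with rfl | hvw
  · rfl
  · obtain ⟨σ, hσ, hσv, hσw⟩ := hGenTrans v w horb hvw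
    set SL := {u : V | ord u ≤ min (ord v) (ord w) ∧
          (v = u ∨ G.Adj v u) ∧ (u = w ∨ G.Adj u w) ∧
          {e : Sym2 V | ∃ π ∈ Γ, Sym2.map π s(v, u) = e} = k ∧
          {e : Sym2 V | ∃ π ∈ Γ, Sym2.map π s(u, w) = e} = h} with hSL
    set SR := {u : V | ord u ≤ min (ord w) (ord v) ∧
          (w = u ∨ G.Adj w u) ∧ (u = v ∨ G.Adj u v) ∧
          {e : Sym2 V | ∃ π ∈ Γ, Sym2.map π s(w, u) = e} = k ∧
          {e : Sym2 V | ∃ π ∈ Γ, Sym2.map π s(u, v) = e} = h} with hSR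
    have key : ∀ u : V, u ∈ SL ↔ σ u ∈ SR := by
      intro u
      have h1 : ord (σ u) = ord u := hordConst σ hσ u
      have h2 : (w = σ u) ↔ (v = u) := by
        rw [← hσv]; exact ⟨fun h' => σ.injective h', fun h' => by rw [h']⟩
      have h3 : (σ u = v) ↔ (u = w) := by
        rw [← hσw]; exact ⟨fun h' => σ.injective h', fun h' => by rw [h']⟩
      have h4 : G.Adj w (σ u) ↔ G.Adj v u := by rw [← hσv]; exact hAut σ hσ v u
      have h5 : G.Adj (σ u) v ↔ G.Adj u w := by rw [← hσw]; exact hAut σ hσ u w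
      have h6 : s(w, σ u) = Sym2.map σ s(v, u) := by rw [← hσv]; rfl
      have h7 : s(σ u, v) = Sym2.map σ s(u, w) := by rw [← hσw]; rfl
      simp only [hSL, hSR, Set.mem_setOf_eq, h1, min_comm (ord w) (ord v), h2, h3, h4, h5,
        h6, h7, orbitEq Γ σ hσ]
    have himg : SR = σ '' SL := by
      ext x
      constructor
      · intro hx
        refine ⟨σ.symm x, ?_, σ.apply_symm_apply x⟩
        rw [key (σ.symm x), σ.apply_symm_apply]; exact hx
      · rintro ⟨u, hu, rfl⟩
        exact (key u).mp hu
    rw [himg, Set.ncard_image_of_injective _ σ.injective]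
end

section
/- Let G be a finite simple graph with a cyclic subgroup Γ = ⟨τ⟩ ≤ Aut(G) acting transitively on a vertex orbit V_i of size n. Then for any v, w ∈ V_i and any pair of colors (k,h) of extended edges within V_i, the number of u ∈ V_i with c(v,u)=k and c(u,w)=h equals the number of u ∈ V_i with c(w,u)=k and c(u,v)=h. -/
/-- Let `Γ = ⟨τ⟩` be a cyclic group of automorphisms of `G`, coloring
extended edges by orbits, and let `v, w` lie in a common `τ`-orbit `O`. Then for any
pair of colors `(k, h)` (encoded as `⟨τ⟩`-orbits in `Sym2 V`), the number of `u ∈ O`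
with `c(v,u) = k` and `c(u,w) = h` equals the number of `u ∈ O` with `c(w,u) = k`
and `c(u,v) = h`. -/
theorem stmt9 {V : Type*} [Fintype V] [DecidableEq V]
    (G : SimpleGraph V) (τ : Equiv.Perm V)
    (hAut : ∀ u v : V, G.Adj (τ u) (τ v) ↔ G.Adj u v)
    (v w : V) (horb : ∃ t : ℤ, (τ ^ t) v = w) :
    ∀ k h : Set (Sym2 V),
      Set.ncard {u : V | (∃ t : ℤ, (τ ^ t) v = u) ∧
          (v = u ∨ G.Adj v u) ∧ (u = w ∨ G.Adj u w) ∧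
          {e : Sym2 V | ∃ t : ℤ, Sym2.map (τ ^ t) s(v, u) = e} = k ∧
          {e : Sym2 V | ∃ t : ℤ, Sym2.map (τ ^ t) s(u, w) = e} = h}
        = Set.ncard {u : V | (∃ t : ℤ, (τ ^ t) v = u) ∧
          (w = u ∨ G.Adj w u) ∧ (u = v ∨ G.Adj u v) ∧
          {e : Sym2 V | ∃ t : ℤ, Sym2.map (τ ^ t) s(w, u) = e} = k ∧
          {e : Sym2 V | ∃ t : ℤ, Sym2.map (τ ^ t) s(u, v) = e} = h} := by
  classical
  intro k h
  obtain ⟨s, hs⟩ := horb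
  -- basic arithmetic of powers
  have happ : ∀ (a b : ℤ) (x : V), (τ ^ a) ((τ ^ b) x) = (τ ^ (a + b)) x := by
    intro a b x
    rw [zpow_add, Equiv.Perm.mul_apply]
  have hzero : ∀ x : V, (τ ^ (0 : ℤ)) x = x := by
    intro x; simp
  -- adjacency is preserved by all integer powers of τ
  have hn : ∀ (n : ℕ) (x y : V), G.Adj ((τ ^ n) x) ((τ ^ n) y) ↔ G.Adj x y := by
    intro n
    induction n with
    | zero => simp
    | succ m ih =>
      intro x y
      rw [pow_succ', Equiv.Perm.mul_apply, Equiv.Perm.mul_apply]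
      exact (hAut _ _).trans (ih x y)
  have hz : ∀ (a : ℤ) (x y : V), G.Adj ((τ ^ a) x) ((τ ^ a) y) ↔ G.Adj x y := by
    intro a x y
    cases a with
    | ofNat n => simpa using hn n x y
    | negSucc n =>
      have key : ∀ z : V, (τ ^ (n + 1)) ((τ ^ (Int.negSucc n)) z) = z := by
        intro z
        rw [zpow_negSucc]
        exact Equiv.apply_symm_apply _ z
      constructor
      · intro hadj
        have h2 := (hn (n + 1) ((τ ^ (Int.negSucc n)) x) ((τ ^ (Int.negSucc n)) y)).mpr hadj
        rwa [key x, key y] at h2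
      · intro hadj
        refine (hn (n + 1) ((τ ^ (Int.negSucc n)) x) ((τ ^ (Int.negSucc n)) y)).mp ?_
        rwa [key x, key y]
  -- composing Sym2 maps
  have hmapmap : ∀ (a b : ℤ) (p : Sym2 V),
      Sym2.map (τ ^ a) (Sym2.map (τ ^ b) p) = Sym2.map (τ ^ (a + b)) p := by
    intro a b p
    rw [Sym2.map_map]
    congr 1
    ext x
    exact happ a b x
  -- orbit-colors are invariant under τ-powers
  have hcol : ∀ (a : ℤ) (p : Sym2 V),
      {e : Sym2 V | ∃ r : ℤ, Sym2.map (τ ^ r) (Sym2.map (τ ^ a) p) = e}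
        = {e : Sym2 V | ∃ r : ℤ, Sym2.map (τ ^ r) p = e} := by
    intro a p
    ext e
    simp only [Set.mem_setOf_eq]
    constructor
    · rintro ⟨t, rfl⟩
      exact ⟨t + a, (hmapmap t a p).symm⟩
    · rintro ⟨t, rfl⟩
      refine ⟨t - a, ?_⟩
      rw [hmapmap, sub_add_cancel]
  -- well-definedness helper
  have wd : ∀ a b : ℤ, (τ ^ a) v = (τ ^ b) v → (τ ^ (s - a)) v = (τ ^ (s - b)) v := by
    intro a b hab
    have h0 : (τ ^ (b - a)) v = v := by
      have h1 : (τ ^ (-a)) ((τ ^ a) v) = (τ ^ (-a)) ((τ ^ b) v) := by rw [hab]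
      rw [happ, happ, show -a + a = (0 : ℤ) by ring, hzero, show -a + b = b - a by ring] at h1
      exact h1.symm
    calc (τ ^ (s - a)) v = (τ ^ (s - b)) ((τ ^ (b - a)) v) := by
          rw [happ, show s - b + (b - a) = s - a by ring]
      _ = (τ ^ (s - b)) v := by rw [h0]
  -- the main combinatorial transfer
  have aux : ∀ (v' w' : V) (s' t : ℤ), (τ ^ s') v' = w' →
      ((v' = (τ ^ t) v' ∨ G.Adj v' ((τ ^ t) v')) ∧ ((τ ^ t) v' = w' ∨ G.Adj ((τ ^ t) v') w') ∧
        {e : Sym2 V | ∃ r : ℤ, Sym2.map (τ ^ r) s(v', (τ ^ t) v') = e} = k ∧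
        {e : Sym2 V | ∃ r : ℤ, Sym2.map (τ ^ r) s((τ ^ t) v', w') = e} = h) →
      ((w' = (τ ^ (s' - t)) v' ∨ G.Adj w' ((τ ^ (s' - t)) v')) ∧
        ((τ ^ (s' - t)) v' = v' ∨ G.Adj ((τ ^ (s' - t)) v') v') ∧
        {e : Sym2 V | ∃ r : ℤ, Sym2.map (τ ^ r) s(w', (τ ^ (s' - t)) v') = e} = k ∧
        {e : Sym2 V | ∃ r : ℤ, Sym2.map (τ ^ r) s((τ ^ (s' - t)) v', v') = e} = h) := by
    intro v' w' s' t hs' ⟨h1, h2, h3, h4⟩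
    have hw : w' = (τ ^ (s' - t)) ((τ ^ t) v') := by
      rw [happ, show s' - t + t = s' by ring, hs']
    refine ⟨?_, ?_, ?_, ?_⟩
    · rcases h1 with h1 | h1
      · left; rw [hw, ← h1]
      · right; rw [hw]; exact (hz (s' - t) _ _).mpr h1.symm
    · rcases h2 with h2 | h2
      · left
        have h5 : (τ ^ (-t)) ((τ ^ t) v') = (τ ^ (-t)) ((τ ^ s') v') := by rw [h2, hs']
        rw [happ, happ, show -t + t = (0 : ℤ) by ring, hzero, show -t + s' = s' - t by ring] at h5
        exact h5.symm
      · right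
        have h6 := (hz (-t) ((τ ^ t) v') w').mpr h2
        rw [← hs'] at h6
        rw [happ, happ, show -t + t = (0 : ℤ) by ring, hzero,
          show -t + s' = s' - t by ring] at h6
        exact h6.symm
    · have e1 : s(w', (τ ^ (s' - t)) v') = Sym2.map (τ ^ (s' - t)) s(v', (τ ^ t) v') := by
        rw [Sym2.map_pair_eq, happ, show s' - t + t = s' by ring, hs', Sym2.eq_swap]
      rw [e1, hcol (s' - t) s(v', (τ ^ t) v')]
      exact h3
    · have e2 : s((τ ^ (s' - t)) v', v') = Sym2.map (τ ^ (-t)) s((τ ^ t) v', w') := by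
        rw [← hs', Sym2.map_pair_eq, happ, happ, show -t + t = (0 : ℤ) by ring, hzero,
          show -t + s' = s' - t by ring, Sym2.eq_swap]
      rw [e2, hcol (-t) s((τ ^ t) v', w')]
      exact h4
  -- the bijection
  obtain ⟨f, hf⟩ : ∃ f : V → V, ∀ (u : V) (t : ℤ), (τ ^ t) v = u → f u = (τ ^ (s - t)) v := by
    refine ⟨fun u => if hx : ∃ r : ℤ, (τ ^ r) v = u then (τ ^ (s - hx.choose)) v else u, ?_⟩
    intro u t ht
    have hx : ∃ r : ℤ, (τ ^ r) v = u := ⟨t, ht⟩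
    simp only [dif_pos hx]
    exact wd _ _ (hx.choose_spec.trans ht.symm)
  set S1 : Set V := {u : V | (∃ t : ℤ, (τ ^ t) v = u) ∧
      (v = u ∨ G.Adj v u) ∧ (u = w ∨ G.Adj u w) ∧
      {e : Sym2 V | ∃ t : ℤ, Sym2.map (τ ^ t) s(v, u) = e} = k ∧
      {e : Sym2 V | ∃ t : ℤ, Sym2.map (τ ^ t) s(u, w) = e} = h} with hS1
  set S2 : Set V := {u : V | (∃ t : ℤ, (τ ^ t) v = u) ∧
      (w = u ∨ G.Adj w u) ∧ (u = v ∨ G.Adj u v) ∧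
      {e : Sym2 V | ∃ t : ℤ, Sym2.map (τ ^ t) s(w, u) = e} = k ∧
      {e : Sym2 V | ∃ t : ℤ, Sym2.map (τ ^ t) s(u, v) = e} = h} with hS2
  have hAB : ∀ u ∈ S1, f u ∈ S2 := by
    intro u hu
    obtain ⟨t, ht⟩ := hu.1
    have h2 := hu.2
    rw [← ht] at h2
    have := aux v w s t hs h2
    rw [hS2, Set.mem_setOf_eq, hf u t ht]
    exact ⟨⟨s - t, rfl⟩, this⟩
  have hBA : ∀ u ∈ S2, f u ∈ S1 := by
    intro u hu
    obtain ⟨t, ht⟩ := hu.1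
    have hs' : (τ ^ (-s)) w = v := by
      rw [← hs, happ, show -s + s = (0 : ℤ) by ring, hzero]
    have heq : (τ ^ (t - s)) w = u := by
      rw [← hs, happ, show t - s + s = t by ring, ht]
    have h2 := hu.2
    rw [← heq] at h2
    have hconc := aux w v (-s) (t - s) hs' h2
    have heq2 : (τ ^ (-s - (t - s))) w = f u := by
      rw [hf u t ht, ← hs, happ, show -s - (t - s) + s = s - t by ring]
    rw [heq2] at hconc
    rw [hS1, Set.mem_setOf_eq]
    exact ⟨⟨s - t, (hf u t ht).symm⟩, hconc⟩
  have hinv : ∀ u : V, (∃ t : ℤ, (τ ^ t) v = u) → f (f u) = u := by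
    intro u ⟨t, ht⟩
    rw [hf u t ht, hf _ (s - t) rfl, show s - (s - t) = t by ring, ht]
  have hinj : Set.InjOn f S1 := by
    intro a ha b hb hfab
    have := hinv a ha.1
    rw [hfab, hinv b hb.1] at this
    exact this.symm
  have himg : S2 = f '' S1 := by
    ext u
    constructor
    · intro hu
      exact ⟨f u, hBA u hu, hinv u hu.1⟩
    · rintro ⟨x, hx, rfl⟩
      exact hAB x hx
  rw [himg, Set.ncard_image_of_injOn hinj]
end

section
/- Let G = (V,E) be a finite decomposable graph and Γ ≤ Aut(G). Given a perfect elimination ordering (v_{σ₁},…,v_{σ_p}) of G, define η₁ = c(v_{σ₁}) and inductively η_k = c(v_k) where v_k is the first vertex in the peo lying outside V_{η₁} ∪ … ∪ V_{η_{k-1}}, with c(v) the Γ-orbit of v. Then the resulting ordered partition (V_{η₁},…,V_{η_r}) of V into Γ-orbits is a color perfect elimination ordering. -/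
/-- Let `G` be a finite (decomposable) graph, `Γ ≤ Aut(G)`, and let
`(v_{σ₁},…,v_{σ_p})` (encoded by `σ : Fin p ≃ V`) be a perfect elimination ordering
of `G`. Order the Γ-orbits by first appearance in the peo: `f v` is the least peo
index of a vertex in the orbit of `v`. Then the resulting ordered partition of `V`
into Γ-orbits is a color perfect elimination ordering: every vertex `v` is simplicial
in the subgraph induced by the orbits appearing no earlier than its own. -/
theorem stmt10 {V : Type*} [Fintype V] [DecidableEq V]
    (G : SimpleGraph V) (Γ : Subgroup (Equiv.Perm V))
    (hAut : ∀ π ∈ Γ, ∀ u v : V, G.Adj (π u) (π v) ↔ G.Adj u v)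
    (p : ℕ) (hp : Fintype.card V = p) (σ : Fin p ≃ V)
    (hpeo : ∀ k l l' : Fin p, k ≤ l → k ≤ l' → σ l ≠ σ l' →
      G.Adj (σ k) (σ l) → G.Adj (σ k) (σ l') → G.Adj (σ l) (σ l'))
    (f : V → ℕ)
    (hf : ∀ v : V, f v = sInf {t : ℕ | ∃ ht : t < p, ∃ π ∈ Γ, π (σ ⟨t, ht⟩) = v}) :
    ∀ v w w' : V, f v ≤ f w → f v ≤ f w' → w ≠ w' →
      G.Adj v w → G.Adj v w' → G.Adj w w' := by
  -- every index of a vertex itself is in its set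
  have hmem : ∀ u : V, ((σ.symm u : Fin p) : ℕ) ∈
      {t : ℕ | ∃ ht : t < p, ∃ π ∈ Γ, π (σ ⟨t, ht⟩) = u} := by
    intro u
    exact ⟨(σ.symm u).isLt, 1, Γ.one_mem, by simp⟩
  have hle : ∀ u : V, f u ≤ ((σ.symm u : Fin p) : ℕ) := by
    intro u; rw [hf]; exact Nat.sInf_le (hmem u)
  -- f is Γ-invariant
  have hinv : ∀ π ∈ Γ, ∀ u : V, f (π u) = f u := by
    intro π hπ u
    rw [hf, hf]
    congr 1
    ext t
    constructor
    · rintro ⟨ht, ρ, hρ, hρ2⟩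
      exact ⟨ht, π⁻¹ * ρ, Γ.mul_mem (Γ.inv_mem hπ) hρ, by
        simp [Equiv.Perm.mul_apply, hρ2]⟩
    · rintro ⟨ht, ρ, hρ, hρ2⟩
      exact ⟨ht, π * ρ, Γ.mul_mem hπ hρ, by
        simp [Equiv.Perm.mul_apply, hρ2]⟩
  intro v w w' hvw hvw' hne hadj hadj'
  -- witness for f v
  have hv : f v ∈ {t : ℕ | ∃ ht : t < p, ∃ π ∈ Γ, π (σ ⟨t, ht⟩) = v} := by
    rw [hf]; exact Nat.sInf_mem ⟨_, hmem v⟩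
  obtain ⟨hfv, π, hπ, hπv⟩ := hv
  set w₁ := π⁻¹ w with hw₁
  set w₁' := π⁻¹ w' with hw₁'
  have hπmem : (π⁻¹ : Equiv.Perm V) ∈ Γ := Γ.inv_mem hπ
  have hfw : f w₁ = f w := hinv _ hπmem w
  have hfw' : f w₁' = f w' := hinv _ hπmem w'
  have hk1 : f v ≤ ((σ.symm w₁ : Fin p) : ℕ) := le_trans (hvw.trans hfw.ge) (hle w₁)
  have hk2 : f v ≤ ((σ.symm w₁' : Fin p) : ℕ) := le_trans (hvw'.trans hfw'.ge) (hle w₁')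
  have hne1 : σ (σ.symm w₁) ≠ σ (σ.symm w₁') := by
    simp only [Equiv.apply_symm_apply]
    intro h; exact hne (by simpa [hw₁, hw₁'] using congrArg π h)
  have hσk : σ ⟨f v, hfv⟩ = π⁻¹ v := by
    have := congrArg (π⁻¹ : Equiv.Perm V) hπv
    simpa using this
  have h1 : G.Adj (σ ⟨f v, hfv⟩) (σ (σ.symm w₁)) := by
    rw [hσk, Equiv.apply_symm_apply, hw₁]
    exact (hAut _ hπmem v w).mpr hadj
  have h2 : G.Adj (σ ⟨f v, hfv⟩) (σ (σ.symm w₁')) := by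
    rw [hσk, Equiv.apply_symm_apply, hw₁']
    exact (hAut _ hπmem v w').mpr hadj'
  have := hpeo ⟨f v, hfv⟩ (σ.symm w₁) (σ.symm w₁') hk1 hk2 hne1 h1 h2
  rw [Equiv.apply_symm_apply, Equiv.apply_symm_apply] at this
  have := (hAut _ hπmem w w').mp (by simpa [hw₁, hw₁'] using this)
  simpa using this
end

section
/- Let (G, 𝒞) be a colored graph with basis matrices J^k (indicator matrices of color classes of extended edges), block structure given by an ordering of vertex color classes, and let BlockTri denote taking the block lower triangular part. Then for all extended edges {v,w} and all colors k,h: [BlockTri(J^k) · BlockTri(J^h)ᵀ]_{vw} = m_{v→w}(k,h). -/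
open Matrix

/-- Block lower triangular part with respect to the ordering of vertex color
classes encoded by `ord`. -/
def BlockTri {V : Type*} (ord : V → ℕ) (x : Matrix V V ℝ) : Matrix V V ℝ :=
  Matrix.of fun v u => if ord u ≤ ord v then x v u else 0

/-- For a colored graph with extended-edge coloring `col` (value `0`
on non-edges), vertex-class ordering `ord` (classes = loop colors), and indicator
basis matrices `J k`, we have, for every extended edge `{v,w}` and all colors `k, h`:
`[BlockTri(J^k) · BlockTri(J^h)ᵀ]_{vw} = m_{v→w}(k,h)`. -/
theorem stmt11 {V : Type*} [Fintype V] [DecidableEq V]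
    (G : SimpleGraph V) (col : V → V → ℕ) (ord : V → ℕ)
    (hsym : ∀ v w : V, col v w = col w v)
    (hcol0 : ∀ v w : V, col v w = 0 ↔ ¬(v = w ∨ G.Adj v w))
    (hord : ∀ v w : V, ord v = ord w ↔ col v v = col w w)
    (J : ℕ → Matrix V V ℝ)
    (hJ : ∀ k, ∀ v w : V, J k v w = if col v w = k then 1 else 0)
    (v w : V) (hvw : v = w ∨ G.Adj v w) (k h : ℕ) (hk : k ≠ 0) (hh : h ≠ 0) :
    (BlockTri ord (J k) * (BlockTri ord (J h))ᵀ) v w =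
      ((Finset.univ.filter fun u : V =>
          ord u ≤ min (ord v) (ord w) ∧ col v u = k ∧ col u w = h).card : ℝ) := by
  rw [Matrix.mul_apply, Finset.card_filter]
  push_cast
  apply Finset.sum_congr rfl
  intro u _
  simp only [BlockTri, Matrix.transpose_apply, Matrix.of_apply, hJ, hsym w u,
    le_min_iff]
  split_ifs <;> simp_all <;> norm_num
end

section
/- Let (G,𝒞) be a 2-path regular colored graph with respect to some ordering of vertex color classes, and let F_i be the set of extended-edge colors occurring between vertices of color class V_i. If k ∈ F_i and c(v',w') = k for some extended edge {v',w'}, then both v' and w' lie in V_i. -/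
/-- The 2-path count `m_{v→w}(k,h)`: the number of vertices `u` in a color class no
later than those of `v` and `w` with `c(v,u) = k` and `c(u,w) = h`. -/
def mfun {V : Type*} [Fintype V] [DecidableEq V] (col : V → V → ℕ) (ord : V → ℕ)
    (v w : V) (k h : ℕ) : ℕ :=
  (Finset.univ.filter fun u : V =>
    ord u ≤ min (ord v) (ord w) ∧ col v u = k ∧ col u w = h).card

/-- The symmetrized 2-path count `m_{v↔w}(k,h) = m_{v→w}(k,h) + m_{v→w}(h,k)`. -/
def msym {V : Type*} [Fintype V] [DecidableEq V] (col : V → V → ℕ) (ord : V → ℕ)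
    (v w : V) (k h : ℕ) : ℕ :=
  mfun col ord v w k h + mfun col ord v w h k

/-- In a 2-path regular colored graph (condition (M1) for the given
ordering of vertex color classes), if `k ∈ F_i` — i.e. `k = c(v,w)` for some extended
edge `{v,w}` with both endpoints of vertex color `i` — and `c(v',w') = k` for some
extended edge `{v',w'}`, then both `v'` and `w'` have vertex color `i`. -/
theorem stmt12 {V : Type*} [Fintype V] [DecidableEq V]
    (G : SimpleGraph V) (col : V → V → ℕ) (ord : V → ℕ)
    (hsym : ∀ v w : V, col v w = col w v)
    (hcol0 : ∀ v w : V, col v w = 0 ↔ ¬(v = w ∨ G.Adj v w))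
    (hord : ∀ v w : V, ord v = ord w ↔ col v v = col w w)
    (hloop : ∀ u v w : V, v ≠ w → col v w ≠ col u u)
    (hM1 : ∀ v w v' w' : V, (v = w ∨ G.Adj v w) → (v' = w' ∨ G.Adj v' w') →
      col v w = col v' w' →
      ∀ k h : ℕ, msym col ord v w k h = msym col ord v' w' k h)
    (v w : V) (hvw : v = w ∨ G.Adj v w) (hclass : col v v = col w w)
    (v' w' : V) (hvw' : v' = w' ∨ G.Adj v' w') (hcc : col v' w' = col v w) :
    col v' v' = col v v ∧ col w' w' = col v v := by
  rcases eq_or_ne v w with rfl | hvwne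
  · rcases eq_or_ne v' w' with rfl | hne'
    · exact ⟨hcc, hcc⟩
    · exact absurd hcc (hloop v v' w' hne')
  rcases eq_or_ne v' w' with rfl | hne'
  · exact absurd hcc.symm (hloop v' v w hvwne)
  have hordvw : ord v = ord w := (hord v w).mpr hclass
  -- first count: filter for mfun v w (col v v) (col v w) is {v}
  have hf1 : (Finset.univ.filter fun u : V =>
      ord u ≤ min (ord v) (ord w) ∧ col v u = col v v ∧ col u w = col v w) = {v} := by
    ext u
    simp only [Finset.mem_filter, Finset.mem_univ, true_and, Finset.mem_singleton]
    constructor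
    · rintro ⟨-, h1, -⟩
      by_contra hne
      exact hloop v v u (Ne.symm hne) h1
    · rintro rfl
      refine ⟨?_, rfl, rfl⟩
      rw [← hordvw, min_self]
  have hf2 : (Finset.univ.filter fun u : V =>
      ord u ≤ min (ord v) (ord w) ∧ col v u = col v w ∧ col u w = col v v) = {w} := by
    ext u
    simp only [Finset.mem_filter, Finset.mem_univ, true_and, Finset.mem_singleton]
    constructor
    · rintro ⟨-, -, h2⟩
      by_contra hne
      exact hloop w u w hne (h2.trans hclass)
    · rintro rfl
      refine ⟨?_, rfl, hclass.symm⟩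
      rw [← hordvw, min_self]
  have hm : msym col ord v w (col v v) (col v w) = 2 := by
    unfold msym mfun
    rw [hf1, hf2]
    simp
  have hm' : msym col ord v' w' (col v v) (col v w) = 2 := by
    rw [← hM1 v w v' w' hvw hvw' hcc.symm, hm]
  have hsub1 : (Finset.univ.filter fun u : V =>
      ord u ≤ min (ord v') (ord w') ∧ col v' u = col v v ∧ col u w' = col v w) ⊆ {v'} := by
    intro u hu
    simp only [Finset.mem_filter, Finset.mem_univ, true_and] at hu
    simp only [Finset.mem_singleton]
    by_contra hne
    exact hloop v v' u (Ne.symm hne) hu.2.1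
  have hsub2 : (Finset.univ.filter fun u : V =>
      ord u ≤ min (ord v') (ord w') ∧ col v' u = col v w ∧ col u w' = col v v) ⊆ {w'} := by
    intro u hu
    simp only [Finset.mem_filter, Finset.mem_univ, true_and] at hu
    simp only [Finset.mem_singleton]
    by_contra hne
    exact hloop v u w' hne hu.2.2
  have hc1 : mfun col ord v' w' (col v v) (col v w) ≤ 1 := by
    unfold mfun
    simpa using Finset.card_le_card hsub1
  have hc2 : mfun col ord v' w' (col v w) (col v v) ≤ 1 := by
    unfold mfun
    simpa using Finset.card_le_card hsub2
  have hsum : mfun col ord v' w' (col v v) (col v w) +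
      mfun col ord v' w' (col v w) (col v v) = 2 := hm'
  have he1 : mfun col ord v' w' (col v v) (col v w) = 1 := by omega
  have he2 : mfun col ord v' w' (col v w) (col v v) = 1 := by omega
  constructor
  · have : (Finset.univ.filter fun u : V =>
        ord u ≤ min (ord v') (ord w') ∧ col v' u = col v v ∧ col u w' = col v w).Nonempty := by
      rw [← Finset.card_pos, ← mfun, he1]; norm_num
    obtain ⟨u, hu⟩ := this
    have huv := hsub1 hu
    simp only [Finset.mem_singleton] at huv
    subst huv
    simp only [Finset.mem_filter, Finset.mem_univ, true_and] at hu
    exact hu.2.1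
  · have : (Finset.univ.filter fun u : V =>
        ord u ≤ min (ord v') (ord w') ∧ col v' u = col v w ∧ col u w' = col v v).Nonempty := by
      rw [← Finset.card_pos, ← mfun, he2]; norm_num
    obtain ⟨u, hu⟩ := this
    have huv := hsub2 hu
    simp only [Finset.mem_singleton] at huv
    subst huv
    simp only [Finset.mem_filter, Finset.mem_univ, true_and] at hu
    exact hu.2.2
end

section
/- Let (G,𝒞) be a 2-path regular colored graph (condition M1 with respect to a given ordering of vertex color classes). If c(v,w) = c(v',w') is a color not in F (i.e., a color connecting distinct vertex color classes), with c(v) ≤ c(w) and c(v') ≤ c(w'), then c(v) = c(v'). -/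
/-- In a 2-path regular colored graph (M1), if `c(v,w) = c(v',w')` is a
color not in `F` (no extended edge of this color joins two vertices of the same vertex
color class), with `c(v) ≤ c(w)` and `c(v') ≤ c(w')` (class indices via `ord`), then
`c(v) = c(v')`. -/
theorem stmt13 {V : Type*} [Fintype V] [DecidableEq V]
    (G : SimpleGraph V) (col : V → V → ℕ) (ord : V → ℕ)
    (hsym : ∀ v w : V, col v w = col w v)
    (hcol0 : ∀ v w : V, col v w = 0 ↔ ¬(v = w ∨ G.Adj v w))
    (hord : ∀ v w : V, ord v = ord w ↔ col v v = col w w)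
    (hloop : ∀ u v w : V, v ≠ w → col v w ≠ col u u)
    (hM1 : ∀ v w v' w' : V, (v = w ∨ G.Adj v w) → (v' = w' ∨ G.Adj v' w') →
      col v w = col v' w' →
      ∀ k h : ℕ, msym col ord v w k h = msym col ord v' w' k h)
    (v w v' w' : V) (hvw : v = w ∨ G.Adj v w) (hvw' : v' = w' ∨ G.Adj v' w')
    (hcc : col v w = col v' w')
    (hF : ∀ a b : V, (a = b ∨ G.Adj a b) → col a a = col b b → col a b ≠ col v w)
    (h1 : ord v ≤ ord w) (h2 : ord v' ≤ ord w') :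
    ord v = ord v' := by
  classical
  have hpos : 0 < mfun col ord v w (col v v) (col v w) := by
    rw [mfun, Finset.card_pos]
    exact ⟨v, Finset.mem_filter.mpr ⟨Finset.mem_univ v,
      ⟨le_min le_rfl h1, rfl, rfl⟩⟩⟩
  have hpos2 : 0 < msym col ord v' w' (col v v) (col v w) := by
    rw [← hM1 v w v' w' hvw hvw' hcc (col v v) (col v w)]
    exact lt_of_lt_of_le hpos (Nat.le_add_right _ _)
  rw [msym] at hpos2
  rcases Nat.lt_or_ge 0 (mfun col ord v' w' (col v v) (col v w)) with hA | hB
  · rw [mfun, Finset.card_pos] at hA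
    obtain ⟨u, hu⟩ := hA
    obtain ⟨-, hle, hk, hc⟩ := Finset.mem_filter.mp hu
    have huv : v' = u := by
      by_contra hne
      exact hloop v v' u hne hk
    subst huv
    exact (hord v v').mpr hk.symm
  · have hB' : 0 < mfun col ord v' w' (col v w) (col v v) := by omega
    rw [mfun, Finset.card_pos] at hB'
    obtain ⟨u, hu⟩ := hB'
    obtain ⟨-, hle, hc, hk⟩ := Finset.mem_filter.mp hu
    have huw : u = w' := by
      by_contra hne
      exact hloop v u w' hne hk
    have h3 : ord w' ≤ ord v' := huw ▸ le_trans hle (min_le_left _ _)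
    have h4 : ord v' = ord w' := le_antisymm h2 h3
    exact absurd hcc.symm (hF v' w' hvw' ((hord v' w').mp h4))
end

section
/- If (G,𝒞) is a CER colored graph (has a cpeo with respect to which M1 holds) with vertices relabeled according to the cpeo, then the colored matrix space 𝒵_G^𝒞 satisfies (Z1): for every x ∈ 𝒵_G^𝒞, BlockTri(x)·BlockTri(x)ᵀ ∈ 𝒵_G^𝒞. -/
open Matrix

/-- The colored matrix space `𝒵_G^𝒞`: symmetric matrices that vanish on non-edges
and are constant on color classes of extended edges. -/
def ZSet {V : Type*} (G : SimpleGraph V) (col : V → V → ℕ) : Set (Matrix V V ℝ) :=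
  {x | x.IsSymm ∧ (∀ v w : V, ¬(v = w ∨ G.Adj v w) → x v w = 0) ∧
    ∀ v w v' w' : V, (v = w ∨ G.Adj v w) → (v' = w' ∨ G.Adj v' w') →
      col v w = col v' w' → x v w = x v' w'}

/-- If `(G,𝒞)` is a CER colored graph — it admits a color perfect
elimination ordering `ord` with respect to which 2-path regularity (M1) holds — then
the colored matrix space `𝒵_G^𝒞` satisfies (Z1):
for every `x ∈ 𝒵_G^𝒞`, `BlockTri(x)·BlockTri(x)ᵀ ∈ 𝒵_G^𝒞`. -/
theorem stmt14 {V : Type*} [Fintype V] [DecidableEq V]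
    (G : SimpleGraph V) (col : V → V → ℕ) (ord : V → ℕ)
    (hsym : ∀ v w : V, col v w = col w v)
    (hcol0 : ∀ v w : V, col v w = 0 ↔ ¬(v = w ∨ G.Adj v w))
    (hord : ∀ v w : V, ord v = ord w ↔ col v v = col w w)
    (hloop : ∀ u v w : V, v ≠ w → col v w ≠ col u u)
    (hcpeo : ∀ v w w' : V, ord v ≤ ord w → ord v ≤ ord w' → w ≠ w' →
      G.Adj v w → G.Adj v w' → G.Adj w w')
    (hM1 : ∀ v w v' w' : V, (v = w ∨ G.Adj v w) → (v' = w' ∨ G.Adj v' w') →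
      col v w = col v' w' →
      ∀ k h : ℕ, msym col ord v w k h = msym col ord v' w' k h) :
    ∀ x ∈ ZSet G col, BlockTri ord x * (BlockTri ord x)ᵀ ∈ ZSet G col := by
  classical
  rintro x ⟨hxs, hx0, hxc⟩
  -- a function giving the common value of `x` on each color class
  set f : ℕ → ℝ := fun k =>
    if h : ∃ p : V × V, (p.1 = p.2 ∨ G.Adj p.1 p.2) ∧ col p.1 p.2 = k then
      x h.choose.1 h.choose.2 else 0 with hf
  have hfx : ∀ v w : V, x v w = f (col v w) := by
    intro v w
    by_cases he : v = w ∨ G.Adj v w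
    · have hex : ∃ p : V × V, (p.1 = p.2 ∨ G.Adj p.1 p.2) ∧ col p.1 p.2 = col v w :=
        ⟨(v, w), he, rfl⟩
      rw [hf]
      simp only [hex, dif_pos]
      exact hxc v w _ _ he hex.choose_spec.1 hex.choose_spec.2.symm
    · have h0 : col v w = 0 := (hcol0 v w).2 he
      rw [hx0 v w he, h0]
      simp only [hf]
      rw [dif_neg]
      rintro ⟨p, hp, hp0⟩
      exact (hcol0 p.1 p.2).1 hp0 hp
  have hxsymm : ∀ v w : V, x w v = x v w := by
    intro v w
    have := congrFun (congrFun hxs v) w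
    simpa [Matrix.transpose_apply] using this
  -- the set of all colors
  set C : Finset ℕ := Finset.image (fun p : V × V => col p.1 p.2) Finset.univ with hC
  -- entrywise formula for the product
  have hentry : ∀ v w : V, (BlockTri ord x * (BlockTri ord x)ᵀ) v w =
      ∑ p ∈ C ×ˢ C, (mfun col ord v w p.1 p.2 : ℝ) * (f p.1 * f p.2) := by
    intro v w
    rw [Matrix.mul_apply]
    have hterm : ∀ u : V, BlockTri ord x v u * (BlockTri ord x)ᵀ u w =
        if ord u ≤ min (ord v) (ord w) then f (col v u) * f (col u w) else 0 := by
      intro u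
      simp only [BlockTri, Matrix.transpose_apply, Matrix.of_apply]
      by_cases h1 : ord u ≤ ord v
      · by_cases h2 : ord u ≤ ord w
        · rw [if_pos h1, if_pos h2, if_pos (le_min h1 h2), hfx v u, hxsymm u w, hfx u w]
        · rw [if_pos h1, if_neg h2, mul_zero,
            if_neg fun h => h2 (h.trans (min_le_right _ _))]
      · rw [if_neg h1, zero_mul, if_neg fun h => h1 (h.trans (min_le_left _ _))]
    simp only [hterm]
    rw [← Finset.sum_filter, ← Finset.sum_fiberwise_of_maps_to
        (g := fun u : V => (col v u, col u w)) (t := C ×ˢ C)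
        (fun u _ => Finset.mem_product.2
          ⟨Finset.mem_image.2 ⟨(v, u), Finset.mem_univ _, rfl⟩,
           Finset.mem_image.2 ⟨(u, w), Finset.mem_univ _, rfl⟩⟩)
        (fun u => f (col v u) * f (col u w))]
    refine Finset.sum_congr rfl fun p _ => ?_
    have hcg : ∀ u ∈ (Finset.univ.filter fun u : V =>
        ord u ≤ min (ord v) (ord w)).filter
          (fun u => (col v u, col u w) = p),
        f (col v u) * f (col u w) = f p.1 * f p.2 := by
      intro u hu
      obtain ⟨-, h⟩ := Finset.mem_filter.1 hu
      rw [Prod.mk.injEq] at h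
      rw [h.1, h.2]
    have hfe : (Finset.univ.filter fun u : V =>
        ord u ≤ min (ord v) (ord w)).filter
          (fun u => (col v u, col u w) = p) =
        Finset.univ.filter (fun u : V =>
          ord u ≤ min (ord v) (ord w) ∧ col v u = p.1 ∧ col u w = p.2) := by
      rw [Finset.filter_filter]
      apply Finset.filter_congr
      intro u _
      simp [Prod.ext_iff]
    rw [Finset.sum_congr rfl hcg, hfe, Finset.sum_const, nsmul_eq_mul, mfun]
  refine ⟨?_, ?_, ?_⟩
  · -- symmetry
    show _ = _
    rw [Matrix.transpose_mul, Matrix.transpose_transpose]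
  · -- vanishing on non-edges
    intro v w hne
    rw [Matrix.mul_apply]
    refine Finset.sum_eq_zero fun u _ => ?_
    simp only [BlockTri, Matrix.transpose_apply, Matrix.of_apply]
    by_cases h1 : ord u ≤ ord v
    · by_cases h2 : ord u ≤ ord w
      · rw [if_pos h1, if_pos h2]
        push_neg at hne
        obtain ⟨hvw, hadj⟩ := hne
        by_cases huv : u = v
        · subst huv
          have hwu : ¬(w = u ∨ G.Adj w u) := by
            push_neg
            exact ⟨fun h => hvw h.symm, fun h => hadj h.symm⟩
          rw [hx0 w u hwu, mul_zero]
        · by_cases huw : u = w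
          · subst huw
            have hvu : ¬(v = u ∨ G.Adj v u) := by
              push_neg
              exact ⟨hvw, hadj⟩
            rw [hx0 v u hvu, zero_mul]
          · by_cases hxv : x v u = 0
            · rw [hxv, zero_mul]
            · by_cases hxw : x w u = 0
              · rw [hxw, mul_zero]
              · exfalso
                have hav : G.Adj v u := by
                  by_contra hc
                  exact hxv (hx0 v u (by push_neg; exact ⟨fun h => huv h.symm, hc⟩))
                have haw : G.Adj w u := by
                  by_contra hc
                  exact hxw (hx0 w u (by push_neg; exact ⟨fun h => huw h.symm, hc⟩))
                exact hadj (hcpeo u v w h1 h2 hvw hav.symm haw.symm)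
      · rw [if_neg h2, mul_zero]
    · rw [if_neg h1, zero_mul]
  · -- constancy on color classes
    intro v w v' w' he he' hcc
    have key : (2 : ℝ) * (BlockTri ord x * (BlockTri ord x)ᵀ) v w =
        (2 : ℝ) * (BlockTri ord x * (BlockTri ord x)ᵀ) v' w' := by
      have hswap : ∀ a b : V, ∑ p ∈ C ×ˢ C, (mfun col ord a b p.2 p.1 : ℝ) *
          (f p.1 * f p.2) = ∑ p ∈ C ×ˢ C, (mfun col ord a b p.1 p.2 : ℝ) *
          (f p.1 * f p.2) := by
        intro a b
        refine Finset.sum_nbij' (fun p => (p.2, p.1)) (fun p => (p.2, p.1)) ?_ ?_ ?_ ?_ ?_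
        · intro p hp
          obtain ⟨h1, h2⟩ := Finset.mem_product.1 hp
          exact Finset.mem_product.2 ⟨h2, h1⟩
        · intro p hp
          obtain ⟨h1, h2⟩ := Finset.mem_product.1 hp
          exact Finset.mem_product.2 ⟨h2, h1⟩
        · intro p _; rfl
        · intro p _; rfl
        · intro p _
          ring
      have h2sum : ∀ a b : V, (2 : ℝ) * (BlockTri ord x * (BlockTri ord x)ᵀ) a b =
          ∑ p ∈ C ×ˢ C, (msym col ord a b p.1 p.2 : ℝ) * (f p.1 * f p.2) := by
        intro a b
        rw [hentry a b]
        simp only [msym, Nat.cast_add, add_mul, Finset.sum_add_distrib,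
          Finset.mul_sum, two_mul]
        rw [hswap a b]
      rw [h2sum, h2sum]
      refine Finset.sum_congr rfl fun p _ => ?_
      rw [hM1 v w v' w' he he' hcc p.1 p.2]
    linarith
end

section
/- If (G,𝒞) is a symmetric CER graph (M1 and M2 hold with respect to a cpeo), then for every vertex color class V_i and all diagonal-block colors k,h ∈ F_i, the indicator matrices commute: J^k J^h = J^h J^k. -/
open Matrix

/-- The indicator matrix `J^k` of a color class of extended edges. -/
def Jmat {V : Type*} [DecidableEq V] (col : V → V → ℕ) (k : ℕ) : Matrix V V ℝ :=
  Matrix.of fun v w => if col v w = k then 1 else 0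

/-- `k` belongs to `F`, the set of extended-edge colors joining two vertices of the
same vertex color class. -/
def memF {V : Type*} (G : SimpleGraph V) (col : V → V → ℕ) (k : ℕ) : Prop :=
  ∃ a b : V, (a = b ∨ G.Adj a b) ∧ col a a = col b b ∧ col a b = k

/-- Endpoint lemma: if `{a,b}` is an extended edge with both endpoints of the same
vertex color, and `{v,w}` is a pair with the same edge color, then `v` and `w` are
in the same vertex color class as `a`. -/
lemma endpoint_lemma {V : Type*} [Fintype V] [DecidableEq V]
    (G : SimpleGraph V) (col : V → V → ℕ) (ord : V → ℕ)
    (hcol0 : ∀ v w : V, col v w = 0 ↔ ¬(v = w ∨ G.Adj v w))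
    (hord : ∀ v w : V, ord v = ord w ↔ col v v = col w w)
    (hloop : ∀ u v w : V, v ≠ w → col v w ≠ col u u)
    (hM1 : ∀ v w v' w' : V, (v = w ∨ G.Adj v w) → (v' = w' ∨ G.Adj v' w') →
      col v w = col v' w' →
      ∀ k h : ℕ, msym col ord v w k h = msym col ord v' w' k h)
    (a b : V) (hab : a = b ∨ G.Adj a b) (hbb : col b b = col a a)
    (v w : V) (hvw : col v w = col a b) :
    col v v = col a a ∧ col w w = col a a := by
  have hevw : v = w ∨ G.Adj v w := by
    by_contra hc
    have : col v w = 0 := (hcol0 v w).mpr hc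
    have : col a b = 0 := by omega
    exact (hcol0 a b).mp this hab
  have hordab : ord a = ord b := (hord a b).mpr hbb.symm
  -- msym a b (col a a) (col a b) = 2
  have h1 : mfun col ord a b (col a a) (col a b) = 1 := by
    rw [mfun]
    have : (Finset.univ.filter fun u : V =>
        ord u ≤ min (ord a) (ord b) ∧ col a u = col a a ∧ col u b = col a b) = {a} := by
      ext u
      simp only [Finset.mem_filter, Finset.mem_univ, true_and, Finset.mem_singleton]
      constructor
      · rintro ⟨-, h2, -⟩
        by_contra hne
        exact hloop a a u (fun e => hne e.symm) h2
      · rintro rfl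
        exact ⟨by omega, rfl, rfl⟩
    rw [this, Finset.card_singleton]
  have h2 : mfun col ord a b (col a b) (col a a) = 1 := by
    rw [mfun]
    have : (Finset.univ.filter fun u : V =>
        ord u ≤ min (ord a) (ord b) ∧ col a u = col a b ∧ col u b = col a a) = {b} := by
      ext u
      simp only [Finset.mem_filter, Finset.mem_univ, true_and, Finset.mem_singleton]
      constructor
      · rintro ⟨-, -, h3⟩
        by_contra hne
        exact hloop a u b hne h3
      · rintro rfl
        exact ⟨by omega, rfl, hbb⟩
    rw [this, Finset.card_singleton]
  have hmsab : msym col ord a b (col a a) (col a b) = 2 := by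
    rw [msym, h1, h2]
  have hmsvw : msym col ord v w (col a a) (col a b) = 2 := by
    rw [hM1 v w a b hevw hab hvw, hmsab]
  -- each mfun is at most 1
  have hsub1 : (Finset.univ.filter fun u : V =>
      ord u ≤ min (ord v) (ord w) ∧ col v u = col a a ∧ col u w = col a b) ⊆ {v} := by
    intro u hu
    simp only [Finset.mem_filter, Finset.mem_univ, true_and] at hu
    simp only [Finset.mem_singleton]
    by_contra hne
    exact hloop a v u (fun e => hne e.symm) hu.2.1
  have hsub2 : (Finset.univ.filter fun u : V =>
      ord u ≤ min (ord v) (ord w) ∧ col v u = col a b ∧ col u w = col a a) ⊆ {w} := by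
    intro u hu
    simp only [Finset.mem_filter, Finset.mem_univ, true_and] at hu
    simp only [Finset.mem_singleton]
    by_contra hne
    exact hloop a u w hne hu.2.2
  have hc1 : mfun col ord v w (col a a) (col a b) ≤ 1 := by
    have := Finset.card_le_card hsub1
    simpa [mfun] using this
  have hc2 : mfun col ord v w (col a b) (col a a) ≤ 1 := by
    have := Finset.card_le_card hsub2
    simpa [mfun] using this
  rw [msym] at hmsvw
  have he1 : mfun col ord v w (col a a) (col a b) = 1 := by omega
  have he2 : mfun col ord v w (col a b) (col a a) = 1 := by omega
  constructor
  · have hv : v ∈ (Finset.univ.filter fun u : V =>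
        ord u ≤ min (ord v) (ord w) ∧ col v u = col a a ∧ col u w = col a b) := by
      have := Finset.eq_of_subset_of_card_le hsub1 (by simpa [mfun] using he1.ge)
      rw [this]; exact Finset.mem_singleton_self v
    simp only [Finset.mem_filter] at hv
    exact hv.2.2.1
  · have hw : w ∈ (Finset.univ.filter fun u : V =>
        ord u ≤ min (ord v) (ord w) ∧ col v u = col a b ∧ col u w = col a a) := by
      have := Finset.eq_of_subset_of_card_le hsub2 (by simpa [mfun] using he2.ge)
      rw [this]; exact Finset.mem_singleton_self w
    simp only [Finset.mem_filter] at hw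
    exact hw.2.2.2

lemma count_comm {V : Type*} [Fintype V] [DecidableEq V]
    (G : SimpleGraph V) (col : V → V → ℕ) (ord : V → ℕ)
    (hsym : ∀ v w : V, col v w = col w v)
    (hcol0 : ∀ v w : V, col v w = 0 ↔ ¬(v = w ∨ G.Adj v w))
    (hord : ∀ v w : V, ord v = ord w ↔ col v v = col w w)
    (hloop : ∀ u v w : V, v ≠ w → col v w ≠ col u u)
    (hM1 : ∀ v w v' w' : V, (v = w ∨ G.Adj v w) → (v' = w' ∨ G.Adj v' w') →
      col v w = col v' w' →
      ∀ k h : ℕ, msym col ord v w k h = msym col ord v' w' k h)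
    (hM2 : ∀ v w : V, col v v = col w w →
      ∀ k h : ℕ, (∃ a b : V, (a = b ∨ G.Adj a b) ∧ col a a = col b b ∧ col a b = k) →
        (∃ a b : V, (a = b ∨ G.Adj a b) ∧ col a a = col b b ∧ col a b = h) →
        mfun col ord v w k h = mfun col ord w v k h)
    (z a b a' b' : V) (hab : a = b ∨ G.Adj a b) (hab' : a' = b' ∨ G.Adj a' b')
    (ha : col a a = col z z) (hb : col b b = col z z)
    (ha' : col a' a' = col z z) (hb' : col b' b' = col z z)
    (v w : V) :
    (Finset.univ.filter fun u : V => col v u = col a b ∧ col u w = col a' b').card =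
    (Finset.univ.filter fun u : V => col v u = col a' b' ∧ col u w = col a b).card := by
  have hbb : col b b = col a a := by omega
  have hbb' : col b' b' = col a' a' := by omega
  have E1 : ∀ x y : V, col x y = col a b → col x x = col z z ∧ col y y = col z z := by
    intro x y hxy
    have := endpoint_lemma G col ord hcol0 hord hloop hM1 a b hab hbb x y hxy
    omega
  have E2 : ∀ x y : V, col x y = col a' b' → col x x = col z z ∧ col y y = col z z := by
    intro x y hxy
    have := endpoint_lemma G col ord hcol0 hord hloop hM1 a' b' hab' hbb' x y hxy
    omega
  by_cases hcase : col v v = col z z ∧ col w w = col z z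
  · obtain ⟨hvv, hww⟩ := hcase
    have hvw : ord v = ord w := (hord v w).mpr (by omega)
    -- ord of any midpoint is automatic
    have hS1 : (Finset.univ.filter fun u : V => col v u = col a b ∧ col u w = col a' b')
        = Finset.univ.filter fun u : V =>
          ord u ≤ min (ord v) (ord w) ∧ col v u = col a b ∧ col u w = col a' b' := by
      ext u
      simp only [Finset.mem_filter, Finset.mem_univ, true_and]
      refine ⟨fun hu => ⟨?_, hu⟩, fun hu => hu.2⟩
      have huu : col u u = col z z := (E1 v u hu.1).2
      have : ord u = ord v := (hord u v).mpr (by omega)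
      omega
    have hS2 : (Finset.univ.filter fun u : V =>
          ord u ≤ min (ord w) (ord v) ∧ col w u = col a b ∧ col u v = col a' b')
        = Finset.univ.filter fun u : V => col v u = col a' b' ∧ col u w = col a b := by
      ext u
      simp only [Finset.mem_filter, Finset.mem_univ, true_and]
      constructor
      · rintro ⟨-, h1, h2⟩
        exact ⟨(hsym v u).trans ((hsym u v).symm ▸ h2), (hsym u w).trans ((hsym w u).symm ▸ h1)⟩
      · rintro ⟨h1, h2⟩
        have h1' : col u v = col a' b' := (hsym u v).trans ((hsym v u).symm ▸ h1)
        have h2' : col w u = col a b := (hsym w u).trans ((hsym u w).symm ▸ h2)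
        have huu : col u u = col z z := (E1 w u h2').2
        have : ord u = ord v := (hord u v).mpr (by omega)
        exact ⟨by omega, h2', h1'⟩
    have hm := hM2 v w (by omega) (col a b) (col a' b')
      ⟨a, b, hab, hbb.symm ▸ rfl, rfl⟩ ⟨a', b', hab', hbb'.symm ▸ rfl, rfl⟩
    rw [hS1]
    rw [mfun, mfun] at hm
    rw [hm, ← hS2]
  · have hS1 : (Finset.univ.filter fun u : V =>
        col v u = col a b ∧ col u w = col a' b') = ∅ := by
      rw [Finset.filter_eq_empty_iff]
      rintro u - ⟨h1, h2⟩
      exact hcase ⟨(E1 v u h1).1, (E2 u w h2).2⟩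
    have hS2 : (Finset.univ.filter fun u : V =>
        col v u = col a' b' ∧ col u w = col a b) = ∅ := by
      rw [Finset.filter_eq_empty_iff]
      rintro u - ⟨h1, h2⟩
      exact hcase ⟨(E2 v u h1).1, (E1 u w h2).2⟩
    rw [hS1, hS2]

lemma Jmat_mul_apply {V : Type*} [Fintype V] [DecidableEq V]
    (col : V → V → ℕ) (k h : ℕ) (v w : V) :
    (Jmat col k * Jmat col h) v w =
      ((Finset.univ.filter fun u : V => col v u = k ∧ col u w = h).card : ℝ) := by
  rw [Matrix.mul_apply]
  rw [Finset.card_filter]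
  push_cast
  refine Finset.sum_congr rfl fun u _ => ?_
  simp only [Jmat, Matrix.of_apply]
  by_cases h1 : col v u = k <;> by_cases h2 : col u w = h <;> simp [h1, h2]


/-- If `(G,𝒞)` is a symmetric CER graph (a cpeo with respect to which
(M1) and (M2) hold), then for every vertex color class `V_i` (the class of a vertex
`z`) and all diagonal-block colors `k, h ∈ F_i` (represented by extended edges
`{a,b}` and `{a',b'}` inside the class of `z`), the indicator matrices commute:
`J^k J^h = J^h J^k`. -/
theorem stmt15 {V : Type*} [Fintype V] [DecidableEq V]
    (G : SimpleGraph V) (col : V → V → ℕ) (ord : V → ℕ)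
    (hsym : ∀ v w : V, col v w = col w v)
    (hcol0 : ∀ v w : V, col v w = 0 ↔ ¬(v = w ∨ G.Adj v w))
    (hord : ∀ v w : V, ord v = ord w ↔ col v v = col w w)
    (hloop : ∀ u v w : V, v ≠ w → col v w ≠ col u u)
    (hcpeo : ∀ v w w' : V, ord v ≤ ord w → ord v ≤ ord w' → w ≠ w' →
      G.Adj v w → G.Adj v w' → G.Adj w w')
    (hM1 : ∀ v w v' w' : V, (v = w ∨ G.Adj v w) → (v' = w' ∨ G.Adj v' w') →
      col v w = col v' w' →
      ∀ k h : ℕ, msym col ord v w k h = msym col ord v' w' k h)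
    (hM2 : ∀ v w : V, col v v = col w w →
      ∀ k h : ℕ, memF G col k → memF G col h →
        mfun col ord v w k h = mfun col ord w v k h) :
    ∀ z a b a' b' : V, (a = b ∨ G.Adj a b) → (a' = b' ∨ G.Adj a' b') →
      col a a = col z z → col b b = col z z → col a' a' = col z z → col b' b' = col z z →
      Jmat col (col a b) * Jmat col (col a' b') =
        Jmat col (col a' b') * Jmat col (col a b) := by

  intro z a b a' b' hab hab' ha hb ha' hb'
  ext v w
  rw [Jmat_mul_apply, Jmat_mul_apply]
  norm_cast
  exact count_comm G col ord hsym hcol0 hord hloop hM1 hM2 z a b a' b'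
    hab hab' ha hb ha' hb' v w
end
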